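/- No condition (MM) is assumed. (a) If μ₁ is a QL of X₁ and μ₂ is a QL of X₂, then the product measure μ₁ ⊗ μ₂ is a QL of the product X = X₁ × X₂. (b) For every index i, every eigenfunction ψ of X₁ with eigenvalue λ¹_i and ‖ψ‖_{L²(X₁,ρ₁)} = 1, and every QL μ₂ of X₂, the measure (|ψ|²ρ₁) ⊗ μ₂ is a QL of the product. -/

import Mathlib

open MeasureTheory ENNReal Filter

noncomputable section

/-- Spectral data on a measure space: a strictly increasing sequence of (distinct)
eigenvalues tending to `+∞`, multiplicities, and for each eigenvalue an orthonormal
family of eigenfunctions in `L²`. -/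
structure SpectralData {X : Type*} [MeasurableSpace X] (ρ : Measure X) where
  lam : ℕ → ℝ
  lam_strictMono : StrictMono lam
  lam_tendsto : Tendsto lam atTop atTop
  m : ℕ → ℕ
  m_pos : ∀ i, 0 < m i
  phi : (i : ℕ) → Fin (m i) → X → ℂ
  phi_measurable : ∀ i k, Measurable (phi i k)
  phi_memLp : ∀ i k, MemLp (phi i k) 2 ρ
  phi_orthonormal : ∀ i (k k' : Fin (m i)),
    ∫ x, phi i k x * (starRingEnd ℂ) (phi i k' x) ∂ρ = if k = k' then 1 else 0

namespace SpectralData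

variable {X X₁ X₂ : Type*} [MeasurableSpace X] [MeasurableSpace X₁] [MeasurableSpace X₂]
  {ρ : Measure X} {ρ₁ : Measure X₁} {ρ₂ : Measure X₂}

/-- An eigenfunction with eigenvalue `lam i`: a nonzero element of the span of the
orthonormal family attached to the index `i`. -/
def IsEigen (D : SpectralData ρ) (i : ℕ) (f : X → ℂ) : Prop :=
  ∃ a : Fin (D.m i) → ℂ, a ≠ 0 ∧ f = fun x => ∑ k, a k * D.phi i k x

/-- An eigenfunction (of some eigenvalue). -/
def IsEigenfunction (D : SpectralData ρ) (f : X → ℂ) : Prop :=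
  ∃ i, D.IsEigen i f

/-- `f` has norm one in `L²(X, ρ)`. -/
def Normalized (ρ : Measure X) (f : X → ℂ) : Prop :=
  ∫⁻ x, (‖f x‖₊ : ℝ≥0∞) ^ 2 ∂ρ = 1

/-- The spectral functional `g_X(a)`: the infimum of `∫ a |φ|² dρ` (as a lower
integral) over all normalized eigenfunctions `φ`. -/
def g (D : SpectralData ρ) (a : X → ℝ≥0∞) : ℝ≥0∞ :=
  ⨅ f : {f : X → ℂ // D.IsEigenfunction f ∧ Normalized ρ f},
    ∫⁻ x, a x * (‖f.1 x‖₊ : ℝ≥0∞) ^ 2 ∂ρ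

/-- `g_X(S) = g_X(𝟙_S)`. -/
def gSet (D : SpectralData ρ) (S : Set X) : ℝ≥0∞ :=
  D.g (S.indicator fun _ => 1)

/-- A (local) quantum limit: a Borel probability measure that is a weak limit of the
measures `|ψ_n|² ρ` for normalized eigenfunctions `ψ_n` whose eigenvalue indices tend
to infinity. -/
def IsQL [TopologicalSpace X] (D : SpectralData ρ) (μ : Measure X) : Prop :=
  IsProbabilityMeasure μ ∧
  ∃ (idx : ℕ → ℕ) (ψ : ℕ → X → ℂ),
    Tendsto idx atTop atTop ∧
    (∀ n, D.IsEigen (idx n) (ψ n)) ∧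
    (∀ n, Normalized ρ (ψ n)) ∧
    ∀ f : C(X, ℝ), Tendsto (fun n => ∫ x, f x * ‖ψ n x‖ ^ 2 ∂ρ) atTop (nhds (∫ x, f x ∂μ))

/-- An eigenfunction of the product with eigenvalue `lam¹ i + lam² j`: a nonzero element
of the span of the products `φ¹_{i,k}(x₁) φ²_{j,l}(x₂)`. -/
def IsProdEigen (D₁ : SpectralData ρ₁) (D₂ : SpectralData ρ₂) (i j : ℕ)
    (f : X₁ × X₂ → ℂ) : Prop :=
  ∃ a : Fin (D₁.m i) → Fin (D₂.m j) → ℂ, a ≠ 0 ∧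
    f = fun p => ∑ k, ∑ l, a k l * D₁.phi i k p.1 * D₂.phi j l p.2

/-- The spectral functional `g_X` on the product `X = X₁ × X₂`. -/
def gProd (D₁ : SpectralData ρ₁) (D₂ : SpectralData ρ₂) (a : X₁ × X₂ → ℝ≥0∞) : ℝ≥0∞ :=
  ⨅ f : {f : X₁ × X₂ → ℂ //
      (∃ i j, IsProdEigen D₁ D₂ i j f) ∧ Normalized (ρ₁.prod ρ₂) f},
    ∫⁻ x, a x * (‖f.1 x‖₊ : ℝ≥0∞) ^ 2 ∂(ρ₁.prod ρ₂)

/-- `g_X(S)` on the product. -/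
def gProdSet (D₁ : SpectralData ρ₁) (D₂ : SpectralData ρ₂) (S : Set (X₁ × X₂)) : ℝ≥0∞ :=
  gProd D₁ D₂ (S.indicator fun _ => 1)

/-- A quantum limit of the product: a weak limit of the measures `|φ_n|² (ρ₁ ⊗ ρ₂)` for
normalized eigenfunctions `φ_n` of the product whose eigenvalues `λ¹_{i_n} + λ²_{j_n}`
tend to `+∞`. -/
def IsProdQL [TopologicalSpace X₁] [TopologicalSpace X₂]
    (D₁ : SpectralData ρ₁) (D₂ : SpectralData ρ₂) (μ : Measure (X₁ × X₂)) : Prop :=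
  IsProbabilityMeasure μ ∧
  ∃ (idx₁ idx₂ : ℕ → ℕ) (ψ : ℕ → X₁ × X₂ → ℂ),
    Tendsto (fun n => D₁.lam (idx₁ n) + D₂.lam (idx₂ n)) atTop atTop ∧
    (∀ n, IsProdEigen D₁ D₂ (idx₁ n) (idx₂ n) (ψ n)) ∧
    (∀ n, Normalized (ρ₁.prod ρ₂) (ψ n)) ∧
    ∀ f : C(X₁ × X₂, ℝ),
      Tendsto (fun n => ∫ x, f x * ‖ψ n x‖ ^ 2 ∂(ρ₁.prod ρ₂)) atTop (nhds (∫ x, f x ∂μ))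

/-- Condition (MM): the map `(i, j) ↦ λ¹_i + λ²_j` is injective. -/
def MM (D₁ : SpectralData ρ₁) (D₂ : SpectralData ρ₂) : Prop :=
  Function.Injective fun p : ℕ × ℕ => D₁.lam p.1 + D₂.lam p.2

end SpectralData


private lemma contIntegrable {Y : Type*} [TopologicalSpace Y] [CompactSpace Y]
    [MeasurableSpace Y] [OpensMeasurableSpace Y] (μ : Measure Y) [IsFiniteMeasure μ]
    (f : C(Y, ℝ)) : Integrable f μ :=
  f.continuous.integrable_of_hasCompactSupport (HasCompactSupport.of_compactSpace _)

private lemma withDensity_prod_meas {Y₁ Y₂ : Type*} [MeasurableSpace Y₁] [MeasurableSpace Y₂]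
    (ρ₁ : Measure Y₁) (ρ₂ : Measure Y₂) [SigmaFinite ρ₁] [SigmaFinite ρ₂]
    {w₁ : Y₁ → ℝ≥0∞} {w₂ : Y₂ → ℝ≥0∞} (hw₁ : Measurable w₁) (hw₂ : Measurable w₂)
    [SigmaFinite (ρ₁.withDensity w₁)] [SigmaFinite (ρ₂.withDensity w₂)] :
    (ρ₁.withDensity w₁).prod (ρ₂.withDensity w₂)
      = (ρ₁.prod ρ₂).withDensity (fun p => w₁ p.1 * w₂ p.2) := by
  refine Measure.prod_eq fun s t hs ht => ?_
  rw [withDensity_apply _ (hs.prod ht), ← Measure.prod_restrict,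
    MeasureTheory.lintegral_prod_mul hw₁.aemeasurable hw₂.aemeasurable,
    withDensity_apply _ hs, withDensity_apply _ ht]

private lemma integral_mul_sq_norm {Y : Type*} [MeasurableSpace Y] (ρ : Measure Y)
    {ψ : Y → ℂ} (hψ : Measurable ψ) (g : Y → ℝ) :
    ∫ x, g x ∂(ρ.withDensity fun x => (‖ψ x‖₊ : ℝ≥0∞) ^ 2) = ∫ x, g x * ‖ψ x‖ ^ 2 ∂ρ := by
  have h : (fun x => (‖ψ x‖₊ : ℝ≥0∞) ^ 2) = fun x => ((‖ψ x‖₊ ^ 2 : NNReal) : ℝ≥0∞) := by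
    ext x; push_cast; ring
  rw [h, integral_withDensity_eq_integral_smul (by measurability) g]
  congr 1; ext x
  simp [NNReal.smul_def, mul_comm]
private lemma tendsto_integral_prod_of_tendsto
    {X₁ X₂ : Type*}
    [MetricSpace X₁] [CompactSpace X₁] [MeasurableSpace X₁] [BorelSpace X₁]
    [MetricSpace X₂] [CompactSpace X₂] [MeasurableSpace X₂] [BorelSpace X₂]
    (ν₁ : ℕ → Measure X₁) (ν₂ : ℕ → Measure X₂) (μ₁ : Measure X₁) (μ₂ : Measure X₂)
    [hpν₁ : ∀ n, IsProbabilityMeasure (ν₁ n)] [hpν₂ : ∀ n, IsProbabilityMeasure (ν₂ n)]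
    [IsProbabilityMeasure μ₁] [IsProbabilityMeasure μ₂]
    (h₁ : ∀ g : C(X₁, ℝ), Tendsto (fun n => ∫ x, g x ∂(ν₁ n)) atTop (nhds (∫ x, g x ∂μ₁)))
    (h₂ : ∀ g : C(X₂, ℝ), Tendsto (fun n => ∫ x, g x ∂(ν₂ n)) atTop (nhds (∫ x, g x ∂μ₂)))
    (f : C(X₁ × X₂, ℝ)) :
    Tendsto (fun n => ∫ p, f p ∂((ν₁ n).prod (ν₂ n))) atTop
      (nhds (∫ p, f p ∂(μ₁.prod μ₂))) := by
  set fstm : C(X₁ × X₂, X₁) := ⟨Prod.fst, continuous_fst⟩ with hfstm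
  set sndm : C(X₁ × X₂, X₂) := ⟨Prod.snd, continuous_snd⟩ with hsndm
  set S : Set C(X₁ × X₂, ℝ) :=
    {F | ∃ g : C(X₁, ℝ), ∃ h : C(X₂, ℝ), F = (g.comp fstm) * (h.comp sndm)} with hSdef
  set P : C(X₁ × X₂, ℝ) → Prop := fun F =>
    Tendsto (fun n => ∫ p, F p ∂((ν₁ n).prod (ν₂ n))) atTop
      (nhds (∫ p, F p ∂(μ₁.prod μ₂))) with hPdef
  -- convergence on pure tensors
  have hSP : ∀ F ∈ S, P F := by
    rintro F ⟨g, h, rfl⟩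
    have key : ∀ (m : Measure X₁) (m' : Measure X₂), IsProbabilityMeasure m →
        IsProbabilityMeasure m' →
        ∫ p, ((g.comp fstm) * (h.comp sndm)) p ∂(m.prod m')
          = (∫ x, g x ∂m) * ∫ y, h y ∂m' := by
      intro m m' hm hm'
      simpa [hfstm, hsndm] using MeasureTheory.integral_prod_mul (μ := m) (ν := m')
        (f := fun x => g x) (g := fun y => h y)
    have e1 : (fun n => ∫ p, ((g.comp fstm) * (h.comp sndm)) p ∂((ν₁ n).prod (ν₂ n)))
        = fun n => (∫ x, g x ∂(ν₁ n)) * ∫ y, h y ∂(ν₂ n) :=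
      funext fun n => key _ _ (hpν₁ n) (hpν₂ n)
    show Tendsto _ atTop _
    rw [e1, key _ _ ‹_› ‹_›]
    exact (h₁ g).mul (h₂ h)
  -- convergence on the span
  have main : ∀ F ∈ Submodule.span ℝ S, P F := by
    intro F hF
    induction hF using Submodule.span_induction with
    | mem F hFS => exact hSP F hFS
    | zero => simp only [hPdef, ContinuousMap.zero_apply, integral_zero]; exact tendsto_const_nhds
    | add F G _ _ hF hG =>
      have e : ∀ (Z : Type) (π : Measure (X₁ × X₂)), IsProbabilityMeasure π → True := fun _ _ _ => trivial
      have eq1 : ∀ (π : Measure (X₁ × X₂)) [IsProbabilityMeasure π],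
          ∫ p, (F + G) p ∂π = (∫ p, F p ∂π) + ∫ p, G p ∂π := by
        intro π _
        simpa using integral_add (contIntegrable π F) (contIntegrable π G)
      have e2 : (fun n => ∫ p, (F + G) p ∂((ν₁ n).prod (ν₂ n)))
          = fun n => (∫ p, F p ∂((ν₁ n).prod (ν₂ n))) + ∫ p, G p ∂((ν₁ n).prod (ν₂ n)) :=
        funext fun n => eq1 _
      show Tendsto _ atTop _
      rw [e2, eq1]
      exact hF.add hG
    | smul c F _ hF =>
      have eq1 : ∀ (π : Measure (X₁ × X₂)),
          ∫ p, (c • F) p ∂π = c * ∫ p, F p ∂π := by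
        intro π
        simpa using integral_smul c fun p => F p
      have e2 : (fun n => ∫ p, (c • F) p ∂((ν₁ n).prod (ν₂ n)))
          = fun n => c * ∫ p, F p ∂((ν₁ n).prod (ν₂ n)) := funext fun n => eq1 _
      show Tendsto _ atTop _
      rw [e2, eq1]
      exact hF.const_mul c
  -- S is a submonoid
  have hone : (1 : C(X₁ × X₂, ℝ)) ∈ S := ⟨1, 1, by ext p; simp⟩
  have hmul : ∀ F ∈ S, ∀ G ∈ S, F * G ∈ S := by
    rintro F ⟨g, h, rfl⟩ G ⟨g', h', rfl⟩
    exact ⟨g * g', h * h', by ext p; simp; ring⟩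
  let M : Submonoid C(X₁ × X₂, ℝ) :=
    { carrier := S, mul_mem' := fun hF hG => hmul _ hF _ hG, one_mem' := hone }
  have hcl : Submonoid.closure S ≤ M := Submonoid.closure_le.mpr subset_rfl
  have hadj : Subalgebra.toSubmodule (Algebra.adjoin ℝ S) = Submodule.span ℝ S :=
    Algebra.adjoin_eq_span_of_subset (R := ℝ) (fun x hx => Submodule.subset_span (hcl hx))
  -- separates points
  have hsep : (Algebra.adjoin ℝ S).SeparatesPoints := by
    intro p q hpq
    by_cases h1 : p.1 = q.1
    · have h2 : p.2 ≠ q.2 := fun h2 => hpq (Prod.ext h1 h2)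
      refine ⟨_, ⟨(1 : C(X₁, ℝ)).comp fstm *
        (⟨fun y => dist y p.2, (continuous_id.dist continuous_const)⟩ : C(X₂, ℝ)).comp sndm,
        Algebra.subset_adjoin ⟨_, _, rfl⟩, rfl⟩, ?_⟩
      simp [hsndm, dist_eq_zero]
      exact fun h => h2 h.symm
    · refine ⟨_, ⟨(⟨fun x => dist x p.1, (continuous_id.dist continuous_const)⟩ : C(X₁, ℝ)).comp fstm *
        (1 : C(X₂, ℝ)).comp sndm,
        Algebra.subset_adjoin ⟨_, _, rfl⟩, rfl⟩, ?_⟩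
      simp [hfstm, dist_eq_zero]
      exact fun h => h1 h.symm
  -- density
  have hdense : f ∈ closure ((Algebra.adjoin ℝ S : Subalgebra ℝ C(X₁ × X₂, ℝ)) : Set C(X₁ × X₂, ℝ)) := by
    have htop := ContinuousMap.subalgebra_topologicalClosure_eq_top_of_separatesPoints
      (Algebra.adjoin ℝ S) hsep
    have : f ∈ (Algebra.adjoin ℝ S).topologicalClosure := by rw [htop]; trivial
    rwa [← Subalgebra.topologicalClosure_coe]
  -- ε/3 argument
  rw [Metric.tendsto_atTop]
  intro ε hε
  obtain ⟨F, hFA, hFf⟩ := Metric.mem_closure_iff.mp hdense (ε / 3) (by linarith)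
  have hPF : P F := by
    refine main F ?_
    rw [← hadj] at *
    exact hFA
  obtain ⟨N, hN⟩ := Metric.tendsto_atTop.mp hPF (ε / 3) (by linarith)
  refine ⟨N, fun n hn => ?_⟩
  have bound : ∀ (π : Measure (X₁ × X₂)) [IsProbabilityMeasure π],
      dist (∫ p, f p ∂π) (∫ p, F p ∂π) ≤ ε / 3 := by
    intro π _
    rw [dist_eq_norm, ← integral_sub (contIntegrable π f) (contIntegrable π F)]
    calc ‖∫ p, f p - F p ∂π‖ ≤ (ε / 3) * (π Set.univ).toReal := by
          apply norm_integral_le_of_norm_le_const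
          filter_upwards with p
          calc ‖f p - F p‖ = dist (f p) (F p) := by rw [dist_eq_norm]
            _ ≤ dist f F := ContinuousMap.dist_apply_le_dist p
            _ ≤ ε / 3 := hFf.le
      _ = ε / 3 := by simp
  calc dist (∫ p, f p ∂((ν₁ n).prod (ν₂ n))) (∫ p, f p ∂(μ₁.prod μ₂))
      ≤ dist (∫ p, f p ∂((ν₁ n).prod (ν₂ n))) (∫ p, F p ∂((ν₁ n).prod (ν₂ n)))
        + dist (∫ p, F p ∂((ν₁ n).prod (ν₂ n))) (∫ p, F p ∂(μ₁.prod μ₂))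
        + dist (∫ p, F p ∂(μ₁.prod μ₂)) (∫ p, f p ∂(μ₁.prod μ₂)) := dist_triangle4 _ _ _ _
    _ < ε / 3 + ε / 3 + ε / 3 := by
        have b1 := bound ((ν₁ n).prod (ν₂ n))
        have b2 := hN n hn
        have b3 := bound (μ₁.prod μ₂)
        rw [dist_comm] at b3
        linarith
    _ = ε := by ring

open SpectralData in
private lemma build_prodQL
    {X₁ X₂ : Type*}
    [MetricSpace X₁] [CompactSpace X₁] [MeasurableSpace X₁] [BorelSpace X₁]
    [MetricSpace X₂] [CompactSpace X₂] [MeasurableSpace X₂] [BorelSpace X₂]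
    (ρ₁ : Measure X₁) (ρ₂ : Measure X₂)
    [IsProbabilityMeasure ρ₁] [IsProbabilityMeasure ρ₂]
    (D₁ : SpectralData ρ₁) (D₂ : SpectralData ρ₂)
    (idx₁ idx₂ : ℕ → ℕ) (ψ₁ : ℕ → X₁ → ℂ) (ψ₂ : ℕ → X₂ → ℂ)
    (hlam : Tendsto (fun n => D₁.lam (idx₁ n) + D₂.lam (idx₂ n)) atTop atTop)
    (he₁ : ∀ n, D₁.IsEigen (idx₁ n) (ψ₁ n)) (he₂ : ∀ n, D₂.IsEigen (idx₂ n) (ψ₂ n))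
    (hn₁ : ∀ n, Normalized ρ₁ (ψ₁ n)) (hn₂ : ∀ n, Normalized ρ₂ (ψ₂ n))
    (μ₁ : Measure X₁) (μ₂ : Measure X₂)
    [IsProbabilityMeasure μ₁] [IsProbabilityMeasure μ₂]
    (hw₁ : ∀ g : C(X₁, ℝ),
      Tendsto (fun n => ∫ x, g x * ‖ψ₁ n x‖ ^ 2 ∂ρ₁) atTop (nhds (∫ x, g x ∂μ₁)))
    (hw₂ : ∀ g : C(X₂, ℝ),
      Tendsto (fun n => ∫ x, g x * ‖ψ₂ n x‖ ^ 2 ∂ρ₂) atTop (nhds (∫ x, g x ∂μ₂))) :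
    IsProdQL D₁ D₂ (μ₁.prod μ₂) := by
  have hm₁ : ∀ n, Measurable (ψ₁ n) := by
    intro n; obtain ⟨a, _, heq⟩ := he₁ n
    rw [heq]; exact Finset.measurable_sum _ fun k _ => (D₁.phi_measurable _ k).const_mul _
  have hm₂ : ∀ n, Measurable (ψ₂ n) := by
    intro n; obtain ⟨a, _, heq⟩ := he₂ n
    rw [heq]; exact Finset.measurable_sum _ fun k _ => (D₂.phi_measurable _ k).const_mul _
  have hd₁ : ∀ n, Measurable fun x => (‖ψ₁ n x‖₊ : ℝ≥0∞) ^ 2 :=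
    fun n => ((hm₁ n).nnnorm.coe_nnreal_ennreal).pow_const 2
  have hd₂ : ∀ n, Measurable fun x => (‖ψ₂ n x‖₊ : ℝ≥0∞) ^ 2 :=
    fun n => ((hm₂ n).nnnorm.coe_nnreal_ennreal).pow_const 2
  set ν₁ : ℕ → Measure X₁ := fun n => ρ₁.withDensity fun x => (‖ψ₁ n x‖₊ : ℝ≥0∞) ^ 2 with hν₁
  set ν₂ : ℕ → Measure X₂ := fun n => ρ₂.withDensity fun x => (‖ψ₂ n x‖₊ : ℝ≥0∞) ^ 2 with hν₂
  haveI hpν₁ : ∀ n, IsProbabilityMeasure (ν₁ n) := fun n =>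
    ⟨by rw [hν₁]; rw [withDensity_apply _ MeasurableSet.univ, setLIntegral_univ]; exact hn₁ n⟩
  haveI hpν₂ : ∀ n, IsProbabilityMeasure (ν₂ n) := fun n =>
    ⟨by rw [hν₂]; rw [withDensity_apply _ MeasurableSet.univ, setLIntegral_univ]; exact hn₂ n⟩
  have hw₁' : ∀ g : C(X₁, ℝ),
      Tendsto (fun n => ∫ x, g x ∂(ν₁ n)) atTop (nhds (∫ x, g x ∂μ₁)) := by
    intro g
    have e : (fun n => ∫ x, g x ∂(ν₁ n)) = fun n => ∫ x, g x * ‖ψ₁ n x‖ ^ 2 ∂ρ₁ :=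
      funext fun n => integral_mul_sq_norm ρ₁ (hm₁ n) g
    rw [e]; exact hw₁ g
  have hw₂' : ∀ g : C(X₂, ℝ),
      Tendsto (fun n => ∫ x, g x ∂(ν₂ n)) atTop (nhds (∫ x, g x ∂μ₂)) := by
    intro g
    have e : (fun n => ∫ x, g x ∂(ν₂ n)) = fun n => ∫ x, g x * ‖ψ₂ n x‖ ^ 2 ∂ρ₂ :=
      funext fun n => integral_mul_sq_norm ρ₂ (hm₂ n) g
    rw [e]; exact hw₂ g
  have epoint : ∀ n (p : X₁ × X₂), (‖ψ₁ n p.1 * ψ₂ n p.2‖₊ : ℝ≥0∞) ^ 2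
      = (‖ψ₁ n p.1‖₊ : ℝ≥0∞) ^ 2 * (‖ψ₂ n p.2‖₊ : ℝ≥0∞) ^ 2 := by
    intro n p; rw [nnnorm_mul]; push_cast; ring
  refine ⟨inferInstance, idx₁, idx₂, fun n p => ψ₁ n p.1 * ψ₂ n p.2, hlam, ?_, ?_, ?_⟩
  · intro n
    obtain ⟨a₁, ha₁, heq₁⟩ := he₁ n
    obtain ⟨a₂, ha₂, heq₂⟩ := he₂ n
    refine ⟨fun k l => a₁ k * a₂ l, ?_, ?_⟩
    · obtain ⟨k, hk⟩ := Function.ne_iff.mp ha₁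
      obtain ⟨l, hl⟩ := Function.ne_iff.mp ha₂
      intro h
      have h' := congrFun (congrFun h k) l
      simp only [Pi.zero_apply] at h'
      exact mul_ne_zero (by simpa using hk) (by simpa using hl) h'
    · funext p
      have e1 := congrFun heq₁ p.1
      have e2 := congrFun heq₂ p.2
      show ψ₁ n p.1 * ψ₂ n p.2 = _
      simp only [e1, e2, Finset.sum_mul_sum]
      exact Finset.sum_congr rfl fun k _ => Finset.sum_congr rfl fun l _ => by ring
  · intro n
    show ∫⁻ p : X₁ × X₂, (‖ψ₁ n p.1 * ψ₂ n p.2‖₊ : ℝ≥0∞) ^ 2 ∂(ρ₁.prod ρ₂) = 1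
    calc ∫⁻ p : X₁ × X₂, (‖ψ₁ n p.1 * ψ₂ n p.2‖₊ : ℝ≥0∞) ^ 2 ∂(ρ₁.prod ρ₂)
        = ∫⁻ p : X₁ × X₂, (‖ψ₁ n p.1‖₊ : ℝ≥0∞) ^ 2 * (‖ψ₂ n p.2‖₊ : ℝ≥0∞) ^ 2
            ∂(ρ₁.prod ρ₂) := by
          congr 1; funext p; exact epoint n p
      _ = (∫⁻ x, (‖ψ₁ n x‖₊ : ℝ≥0∞) ^ 2 ∂ρ₁) * ∫⁻ y, (‖ψ₂ n y‖₊ : ℝ≥0∞) ^ 2 ∂ρ₂ :=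
          MeasureTheory.lintegral_prod_mul (hd₁ n).aemeasurable (hd₂ n).aemeasurable
      _ = 1 := by rw [hn₁ n, hn₂ n, one_mul]
  · intro f
    have hprod : ∀ n,
        ((ρ₁.prod ρ₂).withDensity fun p => (‖ψ₁ n p.1 * ψ₂ n p.2‖₊ : ℝ≥0∞) ^ 2)
          = (ν₁ n).prod (ν₂ n) := by
      intro n
      rw [hν₁, hν₂, withDensity_prod_meas ρ₁ ρ₂ (hd₁ n) (hd₂ n)]
      congr 1; funext p; exact epoint n p
    have e2 : (fun n => ∫ p : X₁ × X₂, f p * ‖ψ₁ n p.1 * ψ₂ n p.2‖ ^ 2 ∂(ρ₁.prod ρ₂))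
        = fun n => ∫ p, f p ∂((ν₁ n).prod (ν₂ n)) := by
      funext n
      rw [← hprod n, integral_mul_sq_norm (ρ₁.prod ρ₂)
        (ψ := fun p => ψ₁ n p.1 * ψ₂ n p.2)
        (((hm₁ n).comp measurable_fst).mul ((hm₂ n).comp measurable_snd)) f]
    show Tendsto (fun n => ∫ p : X₁ × X₂, f p * ‖ψ₁ n p.1 * ψ₂ n p.2‖ ^ 2 ∂(ρ₁.prod ρ₂))
      atTop (nhds (∫ p, f p ∂(μ₁.prod μ₂)))
    rw [e2]
    exact tendsto_integral_prod_of_tendsto ν₁ ν₂ μ₁ μ₂ hw₁' hw₂' f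


open SpectralData in
/-- Without assuming (MM): (a) the product of a quantum limit of `X₁` and a quantum
limit of `X₂` is a quantum limit of the product; (b) for any fixed normalized
eigenfunction `ψ` of `X₁` and any quantum limit `μ₂` of `X₂`, the measure
`(|ψ|²ρ₁) ⊗ μ₂` is a quantum limit of the product. -/
theorem prod_ql_of_ql
    {X₁ X₂ : Type*}
    [MetricSpace X₁] [CompactSpace X₁] [MeasurableSpace X₁] [BorelSpace X₁]
    [MetricSpace X₂] [CompactSpace X₂] [MeasurableSpace X₂] [BorelSpace X₂]
    (ρ₁ : Measure X₁) (ρ₂ : Measure X₂)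
    [IsProbabilityMeasure ρ₁] [IsProbabilityMeasure ρ₂]
    (D₁ : SpectralData ρ₁) (D₂ : SpectralData ρ₂) :
    (∀ (μ₁ : Measure X₁) (μ₂ : Measure X₂), D₁.IsQL μ₁ → D₂.IsQL μ₂ →
      IsProdQL D₁ D₂ (μ₁.prod μ₂)) ∧
    (∀ (i : ℕ) (ψ : X₁ → ℂ), D₁.IsEigen i ψ → Normalized ρ₁ ψ →
      ∀ μ₂ : Measure X₂, D₂.IsQL μ₂ →
        IsProdQL D₁ D₂
          ((ρ₁.withDensity fun x => (‖ψ x‖₊ : ℝ≥0∞) ^ 2).prod μ₂)) := by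
  constructor
  · rintro μ₁ μ₂ ⟨hpμ₁, idx₁, ψ₁, hidx₁, he₁, hn₁, hw₁⟩ ⟨hpμ₂, idx₂, ψ₂, hidx₂, he₂, hn₂, hw₂⟩
    exact build_prodQL ρ₁ ρ₂ D₁ D₂ idx₁ idx₂ ψ₁ ψ₂
      (Filter.Tendsto.atTop_add_atTop (D₁.lam_tendsto.comp hidx₁) (D₂.lam_tendsto.comp hidx₂))
      he₁ he₂ hn₁ hn₂ μ₁ μ₂ hw₁ hw₂
  · rintro i ψ hψ hnψ μ₂ ⟨hpμ₂, idx₂, ψ₂, hidx₂, he₂, hn₂, hw₂⟩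
    have hmψ : Measurable ψ := by
      obtain ⟨a, _, heq⟩ := hψ
      rw [heq]; exact Finset.measurable_sum _ fun k _ => (D₁.phi_measurable _ k).const_mul _
    haveI : IsProbabilityMeasure (ρ₁.withDensity fun x => (‖ψ x‖₊ : ℝ≥0∞) ^ 2) :=
      ⟨by rw [withDensity_apply _ MeasurableSet.univ, setLIntegral_univ]; exact hnψ⟩
    exact build_prodQL ρ₁ ρ₂ D₁ D₂ (fun _ => i) idx₂ (fun _ => ψ) ψ₂
      (tendsto_atTop_add_const_left _ _ (D₂.lam_tendsto.comp hidx₂))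
      (fun _ => hψ) he₂ (fun _ => hnψ) hn₂ _ μ₂
      (fun g => by
        rw [integral_mul_sq_norm ρ₁ hmψ g]
        exact tendsto_const_nhds)
      hw₂
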